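/- For the sorted-threshold simplex projection: let μ₁ ≥ μ₂ ≥ ... ≥ μ_N be the entries of v ∈ ℝ^N sorted in descending order, let ρ = max{ j : μ_j - (1/j)(∑_{i=1}^j μ_i - z) > 0 } and θ = (1/ρ)(∑_{i=1}^ρ μ_i - z). Then w with w_i = max(v_i - θ, 0) is the Euclidean projection of v onto the simplex {x ∈ ℝ^N : x ≥ 0, ∑ x_i = z}, i.e., w minimizes ‖x - v‖₂ over that set. -/

import Mathlib

/-- correctness of the sorted-threshold projection onto the simplex
`{x : x ≥ 0, ∑ x = z}` (Algorithm 1 of the paper). -/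
theorem simplex_projection_correct (N : ℕ) (z : ℝ) (hz : 0 < z)
    (v μ : Fin N → ℝ)
    (hsum : z < ∑ i, v i)
    (hperm : ∃ e : Equiv.Perm (Fin N), ∀ i, μ i = v (e i))
    (hsorted : ∀ i j : Fin N, i ≤ j → μ j ≤ μ i)
    (S : ℕ → ℝ)
    (hS : ∀ j, S j = ∑ i ∈ Finset.univ.filter (fun i : Fin N => (i : ℕ) < j), μ i)
    (ρ : ℕ) (hρ1 : 1 ≤ ρ) (hρN : ρ ≤ N)
    (hρpos : 0 < μ ⟨ρ - 1, by omega⟩ - (1 / (ρ : ℝ)) * (S ρ - z))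
    (hρmax : ∀ j, (h1 : 1 ≤ j) → (hN : j ≤ N) →
      0 < μ ⟨j - 1, by omega⟩ - (1 / (j : ℝ)) * (S j - z) → j ≤ ρ)
    (θ : ℝ) (hθ : θ = (1 / (ρ : ℝ)) * (S ρ - z))
    (w : Fin N → ℝ) (hw : ∀ i, w i = max (v i - θ) 0) :
    (∀ i, 0 ≤ w i) ∧ (∑ i, w i = z) ∧
      ∀ x : Fin N → ℝ, (∀ i, 0 ≤ x i) → (∑ i, x i = z) →
        ∑ i, (w i - v i) ^ 2 ≤ ∑ i, (x i - v i) ^ 2 := by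
  have hρR : (0:ℝ) < (ρ:ℝ) := by exact_mod_cast hρ1
  have key1 : ∀ i : Fin N, (i:ℕ) < ρ → θ < μ i := by
    intro i hi
    have h1 : μ ⟨ρ-1, by omega⟩ ≤ μ i := by
      apply hsorted
      simp only [Fin.le_def]
      omega
    rw [← hθ] at hρpos
    linarith
  have key2 : ∀ i : Fin N, ρ ≤ (i:ℕ) → μ i ≤ θ := by
    intro i hi
    have hρN' : ρ < N := lt_of_le_of_lt hi i.isLt
    have hS1 : S (ρ+1) = S ρ + μ ⟨ρ, hρN'⟩ := by
      rw [hS, hS]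
      have hins : Finset.univ.filter (fun i : Fin N => (i:ℕ) < ρ+1)
          = insert ⟨ρ, hρN'⟩ (Finset.univ.filter (fun i : Fin N => (i:ℕ) < ρ)) := by
        ext x
        simp [Fin.ext_iff]
        omega
      rw [hins, Finset.sum_insert (by simp)]
      ring
    have hne : ¬ (ρ+1 ≤ ρ) := by omega
    have h2 : ¬ (0 < μ ⟨ρ+1-1, by omega⟩ - (1/((ρ+1:ℕ):ℝ)) * (S (ρ+1) - z)) :=
      fun h => hne (hρmax (ρ+1) (by omega) (by omega) h)
    push_neg at h2
    have hidx : (⟨ρ+1-1, by omega⟩ : Fin N) = ⟨ρ, hρN'⟩ := by simp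
    rw [hidx, hS1] at h2
    have hc : ((ρ+1:ℕ):ℝ) = (ρ:ℝ)+1 := by push_cast; ring
    rw [hc] at h2
    have hμρ : μ ⟨ρ, hρN'⟩ ≤ θ := by
      rw [hθ]
      have hpos : (0:ℝ) < (ρ:ℝ)+1 := by positivity
      have h3 := mul_le_mul_of_nonneg_left h2 hpos.le
      rw [mul_zero] at h3
      have h5 : (0:ℝ) < (ρ:ℝ)+1 := hpos
      have h6 : ((ρ:ℝ)+1) * (1/((ρ:ℝ)+1) * (S ρ + μ ⟨ρ, hρN'⟩ - z))
          = S ρ + μ ⟨ρ, hρN'⟩ - z := by field_simp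
      have h7 : (ρ:ℝ) * μ ⟨ρ, hρN'⟩ ≤ S ρ - z := by nlinarith [h3, h6]
      rw [mul_comm, mul_one_div, le_div_iff₀ hρR]
      linarith
    have h4 : μ i ≤ μ ⟨ρ, hρN'⟩ := by
      apply hsorted
      simp only [Fin.le_def]
      omega
    linarith
  have hcard : (Finset.univ.filter (fun i : Fin N => (i:ℕ) < ρ)).card = ρ := by
    have : Finset.univ.filter (fun i : Fin N => (i:ℕ) < ρ)
        = Finset.map (Fin.castLEEmb hρN) Finset.univ := by
      ext x
      simp only [Finset.mem_filter, Finset.mem_univ, true_and, Finset.mem_map,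
        Fin.castLEEmb, Function.Embedding.coeFn_mk, Fin.castLE]
      constructor
      · intro h
        exact ⟨⟨x, h⟩, by simp⟩
      · rintro ⟨a, ha⟩
        have : (x:ℕ) = (a:ℕ) := by
          rw [← ha]
        rw [this]
        exact a.isLt
    rw [this, Finset.card_map, Finset.card_univ, Fintype.card_fin]
  have hwnn : ∀ i, 0 ≤ w i := fun i => by rw [hw i]; exact le_max_right _ _
  have hsumw : ∑ i, w i = z := by
    obtain ⟨e, he⟩ := hperm
    have h1 : ∑ i, w i = ∑ i, max (μ i - θ) 0 := by
      calc ∑ i, w i = ∑ i, max (v i - θ) 0 := by simp [hw]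
        _ = ∑ i, max (v (e i) - θ) 0 := (Equiv.sum_comp e (fun i => max (v i - θ) 0)).symm
        _ = ∑ i, max (μ i - θ) 0 := by simp [he]
    rw [h1, ← Finset.sum_filter_add_sum_filter_not Finset.univ (fun i : Fin N => (i:ℕ) < ρ)]
    have h2 : ∑ i ∈ Finset.univ.filter (fun i : Fin N => (i:ℕ) < ρ), max (μ i - θ) 0
        = ∑ i ∈ Finset.univ.filter (fun i : Fin N => (i:ℕ) < ρ), (μ i - θ) := by
      refine Finset.sum_congr rfl (fun i hi => ?_)
      simp only [Finset.mem_filter] at hi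
      rw [max_eq_left]
      linarith [key1 i hi.2]
    have h3 : ∑ i ∈ Finset.univ.filter (fun i : Fin N => ¬ (i:ℕ) < ρ), max (μ i - θ) 0 = 0 := by
      refine Finset.sum_eq_zero (fun i hi => ?_)
      simp only [Finset.mem_filter] at hi
      rw [max_eq_right]
      linarith [key2 i (le_of_not_gt hi.2)]
    rw [h2, h3, Finset.sum_sub_distrib, Finset.sum_const, hcard, ← hS ρ, hθ]
    have : (ρ:ℝ) ≠ 0 := ne_of_gt hρR
    rw [nsmul_eq_mul]
    field_simp
    ring
  refine ⟨hwnn, hsumw, ?_⟩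
  intro x hx hxs
  have hbound : ∑ i, (x i - w i) * (v i - w i) ≤ 0 := by
    have h1 : ∀ i, (x i - w i) * (v i - w i) ≤ θ * (x i - w i) := by
      intro i
      rcases le_or_gt (v i - θ) 0 with h | h
      · rw [hw i, max_eq_right h]
        simp only [sub_zero]
        nlinarith [hx i]
      · rw [hw i, max_eq_left h.le]
        nlinarith []
    calc ∑ i, (x i - w i) * (v i - w i) ≤ ∑ i, θ * (x i - w i) :=
          Finset.sum_le_sum (fun i _ => h1 i)
      _ = θ * (∑ i, x i - ∑ i, w i) := by rw [← Finset.mul_sum, Finset.sum_sub_distrib]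
      _ = 0 := by rw [hxs, hsumw]; ring
  have hexp : ∑ i, (x i - v i)^2
      = ∑ i, ((x i - w i)^2 + (-2) * ((x i - w i) * (v i - w i)) + (w i - v i)^2) :=
    Finset.sum_congr rfl (fun i _ => by ring)
  rw [hexp, Finset.sum_add_distrib, Finset.sum_add_distrib, ← Finset.mul_sum]
  have h4 : 0 ≤ ∑ i, (x i - w i)^2 := Finset.sum_nonneg (fun i _ => sq_nonneg _)
  nlinarith [hbound, h4]
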